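/- Let A be a real nonassociative algebra with unit having a basis {1, i, w, v} satisfying table (Tp), let [x, y] = xy − yx, and write [v, w] = α·1 + β·i with α, β ∈ ℝ. If α ≠ 0 and β = 0, then there exists a basis {e₁, e₂, e₃, e₄} of A such that [e₂, e₃] = e₁, [e₂, e₄] = −e₃, [e₃, e₄] = e₂, and [e₁, e₂] = [e₁, e₃] = [e₁, e₄] = 0; that is, (A, [·,·]) is isomorphic to the indecomposable solvable Lie algebra 𝔤_{4,9} with zero parameter. -/

import Mathlib

/-- For a real nonassociative unital algebra `A` with basis `{1, i, w, v}` satisfying table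
`(Tp)` and `[v, w] = α•1 + β•i`: if `α ≠ 0` and `β = 0`, then `A` has a basis
`{e₁, e₂, e₃, e₄}` with `[e₂,e₃] = e₁`, `[e₂,e₄] = -e₃`, `[e₃,e₄] = e₂` and `e₁` central;
that is, `(A, [·,·]) ≅ 𝔤_{4,9}` with zero parameter. -/
theorem lie_g49_of_alpha_ne_zero_beta_zero {A : Type*} [NonAssocRing A] [Module ℝ A]
    [SMulCommClass ℝ A A] [IsScalarTower ℝ A A]
    (B : Module.Basis (Fin 4) ℝ A) (i w v : A)
    (hB0 : B 0 = 1) (hB1 : B 1 = i) (hB2 : B 2 = w) (hB3 : B 3 = v)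
    (hii : i * i = -1) (hiw : i * w = -v) (hiv : i * v = w)
    (hwi : w * i = v) (hvi : v * i = -w)
    (hww : w * w ∈ Submodule.span ℝ ({1, i} : Set A))
    (hwv : w * v ∈ Submodule.span ℝ ({1, i} : Set A))
    (hvw : v * w ∈ Submodule.span ℝ ({1, i} : Set A))
    (hvv : v * v ∈ Submodule.span ℝ ({1, i} : Set A))
    (α β : ℝ) (hvw' : v * w - w * v = α • (1 : A) + β • i)
    (hα : α ≠ 0) (hβ : β = 0) :
    ∃ (B' : Module.Basis (Fin 4) ℝ A) (e₁ e₂ e₃ e₄ : A),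
      B' 0 = e₁ ∧ B' 1 = e₂ ∧ B' 2 = e₃ ∧ B' 3 = e₄ ∧
      e₂ * e₃ - e₃ * e₂ = e₁ ∧ e₂ * e₄ - e₄ * e₂ = -e₃ ∧ e₃ * e₄ - e₄ * e₃ = e₂ ∧
      e₁ * e₂ - e₂ * e₁ = 0 ∧ e₁ * e₃ - e₃ * e₁ = 0 ∧ e₁ * e₄ - e₄ * e₁ = 0 := by
  subst hβ
  rw [zero_smul, add_zero] at hvw'
  set s : ℝ := if 0 < α then 1 else -1 with hs
  have hs0 : s ≠ 0 := by by_cases h : 0 < α <;> simp [hs, h]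
  have hs2 : s * s = 1 := by by_cases h : 0 < α <;> simp [hs, h]
  set a : ℝ := Real.sqrt |α|⁻¹ with ha
  have ha0 : a ≠ 0 := by
    rw [ha]
    exact ne_of_gt (Real.sqrt_pos.mpr (by positivity))
  have haa : a * a = |α|⁻¹ := Real.mul_self_sqrt (by positivity)
  have key : s * (a * a) * α = 1 := by
    rw [haa]
    rcases lt_or_gt_of_ne hα with h | h
    · rw [hs, if_neg (not_lt.mpr h.le), abs_of_neg h]
      field_simp
    · rw [hs, if_pos h, abs_of_pos h]
      field_simp
  set u : Fin 4 → ℝˣ :=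
    ![1, Units.mk0 (s / 2) (by simpa using hs0), Units.mk0 (s * a) (mul_ne_zero hs0 ha0),
      Units.mk0 a ha0] with hu
  refine ⟨(B.unitsSMul u).reindex (Equiv.swap 1 3), 1, a • v, (s * a) • w, (s / 2) • i,
    ?_, ?_, ?_, ?_, ?_, ?_, ?_, ?_, ?_, ?_⟩
  · have h1 : (Equiv.swap (1 : Fin 4) 3).symm 0 = 0 := by decide
    have h2 : (Equiv.swap (1 : Fin 4) 3) 0 = 0 := by decide
    simp [Module.Basis.reindex_apply, Module.Basis.unitsSMul_apply, h1, h2, hu, hB0]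
  · have : (Equiv.swap (1 : Fin 4) 3).symm 1 = 3 := by decide
    simp [Module.Basis.reindex_apply, Module.Basis.unitsSMul_apply, this, hu, hB3]
  · have h1 : (Equiv.swap (1 : Fin 4) 3).symm 2 = 2 := by decide
    have h2 : (Equiv.swap (1 : Fin 4) 3) 2 = 2 := by decide
    simp [Module.Basis.reindex_apply, Module.Basis.unitsSMul_apply, h1, h2, hu, hB2, Units.smul_def]
  · have : (Equiv.swap (1 : Fin 4) 3).symm 3 = 1 := by decide
    simp [Module.Basis.reindex_apply, Module.Basis.unitsSMul_apply, this, hu, hB1]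
  · rw [smul_mul_assoc, mul_smul_comm, smul_mul_assoc, mul_smul_comm, smul_smul, smul_smul]
    have hc : a * (s * a) = s * a * a := by ring
    rw [hc, ← smul_sub, hvw', smul_smul]
    have : s * a * a * α = 1 := by linarith [key, mul_assoc s a a]
    rw [this, one_smul]
  · rw [smul_mul_assoc, mul_smul_comm, smul_mul_assoc, mul_smul_comm, smul_smul, smul_smul,
      hvi, hiv, smul_neg]
    rw [← neg_smul, ← sub_smul, ← neg_smul]
    congr 1
    ring
  · rw [smul_mul_assoc, mul_smul_comm, smul_mul_assoc, mul_smul_comm, smul_smul, smul_smul,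
      hwi, hiw, smul_neg, sub_neg_eq_add, ← add_smul]
    have h : s * a * (s / 2) + s / 2 * (s * a) = s * s * a := by ring
    rw [h, hs2, one_mul]
  · rw [one_mul, mul_one, sub_self]
  · rw [one_mul, mul_one, sub_self]
  · rw [one_mul, mul_one, sub_self]
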